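/- Let X be a Hausdorff perfect paracompact topological space (perfect meaning every open subset of X is an Fσ-set) and let E be a nonempty subspace of X that is completely metrizable (its subspace topology is induced by some complete metric). Then E is an H₁-retract of X; that is, there exists a mapping r : X → E with r(x) = x for all x ∈ E such that for every open set V of E the preimage r⁻¹(V) is an Fσ-set in X. -/

import Mathlib

/-- A set is an Fσ-set if it is a countable union of closed sets. -/
def IsFsigma {X : Type*} [TopologicalSpace X] (A : Set X) : Prop :=
  ∃ F : ℕ → Set X, (∀ n, IsClosed (F n)) ∧ A = ⋃ n, F n

/-- A mapping is of the first Lebesgue class if the preimage of every open set is Fσ. -/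
def LebesgueClassOne {X Y : Type*} [TopologicalSpace X] [TopologicalSpace Y] (g : X → Y) : Prop :=
  ∀ V : Set Y, IsOpen V → IsFsigma (g ⁻¹' V)

/-- `E` is an H₁-retract of `X` if there is a first Lebesgue class map `r : X → E`
fixing the points of `E`. -/
def IsH1Retract {X : Type*} [TopologicalSpace X] (E : Set X) : Prop :=
  ∃ r : X → E, (∀ x : E, r x = x) ∧ LebesgueClassOne r
/-- A topological space is completely metrizable if its topology is induced by some
complete metric. -/
def CompletelyMetrizable (X : Type*) [t : TopologicalSpace X] : Prop :=
  ∃ m : MetricSpace X, m.toUniformSpace.toTopologicalSpace = t ∧ @CompleteSpace X m.toUniformSpace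

namespace H1Aux

open Set

variable {X : Type u} [TopologicalSpace X]

lemma isFsigma_of_isClosed {A : Set X} (h : IsClosed A) : IsFsigma A :=
  ⟨fun _ => A, fun _ => h, (Set.iUnion_const A).symm⟩

lemma isFsigma_iUnion_nat {f : ℕ → Set X} (h : ∀ n, IsFsigma (f n)) :
    IsFsigma (⋃ n, f n) := by
  choose F hFc hFu using h
  refine ⟨fun p => F (Nat.unpair p).1 (Nat.unpair p).2, fun p => hFc _ _, ?_⟩
  ext x
  simp only [mem_iUnion]
  constructor
  · rintro ⟨n, hx⟩
    rw [hFu n] at hx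
    rcases mem_iUnion.1 hx with ⟨m, hm⟩
    exact ⟨Nat.pair n m, by simpa [Nat.unpair_pair] using hm⟩
  · rintro ⟨p, hp⟩
    exact ⟨(Nat.unpair p).1, by rw [hFu]; exact mem_iUnion.2 ⟨_, hp⟩⟩

lemma isFsigma_iUnion_countable {κ : Type*} [Countable κ] {f : κ → Set X}
    (h : ∀ k, IsFsigma (f k)) : IsFsigma (⋃ k, f k) := by
  rcases isEmpty_or_nonempty κ with he | hn
  · refine ⟨fun _ => ∅, fun _ => isClosed_empty, by simp⟩
  · obtain ⟨g, hg⟩ := exists_surjective_nat κ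
    have : (⋃ k, f k) = ⋃ n, f (g n) := by
      ext x; simp only [mem_iUnion]
      exact ⟨fun ⟨k, hk⟩ => by obtain ⟨n, rfl⟩ := hg k; exact ⟨n, hk⟩,
        fun ⟨n, hn'⟩ => ⟨g n, hn'⟩⟩
    rw [this]
    exact isFsigma_iUnion_nat fun n => h (g n)

lemma IsFsigma.inter {A B : Set X} (hA : IsFsigma A) (hB : IsFsigma B) :
    IsFsigma (A ∩ B) := by
  obtain ⟨F, hFc, rfl⟩ := hA
  obtain ⟨G, hGc, rfl⟩ := hB
  have : (⋃ n, F n) ∩ ⋃ n, G n = ⋃ p : ℕ × ℕ, F p.1 ∩ G p.2 := by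
    ext x; simp only [Set.mem_inter_iff, Set.mem_iUnion]
    exact ⟨fun ⟨⟨n, hn⟩, ⟨m, hm⟩⟩ => ⟨⟨n, m⟩, hn, hm⟩, fun ⟨p, h1, h2⟩ => ⟨⟨p.1, h1⟩, ⟨p.2, h2⟩⟩⟩
  rw [this]
  exact isFsigma_iUnion_countable fun p => isFsigma_of_isClosed ((hFc p.1).inter (hGc p.2))



/-- A "nice partition" of `X`: a disjoint cover by sets each of which is a countable
union of closed sets, such that each of these countable families is (jointly over the
pieces) locally finite. -/
structure NicePart (X : Type u) [TopologicalSpace X] : Type (u + 1) where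
  ι : Type u
  Q : ι → Set X
  hdisj : ∀ {i j : ι}, i ≠ j → Disjoint (Q i) (Q j)
  hcover : ∀ x : X, ∃ i, x ∈ Q i
  κ : Type u
  hκ : Countable κ
  C : ι → κ → Set X
  hCc : ∀ i k, IsClosed (C i k)
  hQC : ∀ i, Q i = ⋃ k, C i k
  hlf : ∀ k, LocallyFinite fun i => C i k

namespace NicePart

variable {X : Type u} [TopologicalSpace X] (P : NicePart X)

lemma C_subset (i : P.ι) (k : P.κ) : P.C i k ⊆ P.Q i := by
  rw [P.hQC i]; exact subset_iUnion _ k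

lemma isFsigma_biUnion (S : Set P.ι) : IsFsigma (⋃ i ∈ S, P.Q i) := by
  haveI := P.hκ
  have heq : (⋃ i ∈ S, P.Q i) = ⋃ k : P.κ, ⋃ i : S, P.C i k := by
    ext x
    simp only [mem_iUnion]
    constructor
    · rintro ⟨i, hi, hx⟩
      rw [P.hQC i] at hx
      rcases mem_iUnion.1 hx with ⟨k, hk⟩
      exact ⟨k, ⟨i, hi⟩, hk⟩
    · rintro ⟨k, ⟨i, hi⟩, hx⟩
      exact ⟨i, hi, P.C_subset i k hx⟩
  rw [heq]
  refine isFsigma_iUnion_countable fun k => isFsigma_of_isClosed ?_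
  exact ((P.hlf k).comp_injective Subtype.val_injective).isClosed_iUnion fun i => P.hCc _ _

noncomputable def idx (x : X) : P.ι := (P.hcover x).choose

lemma mem_idx (x : X) : x ∈ P.Q (P.idx x) := (P.hcover x).choose_spec

lemma idx_eq {x : X} {i : P.ι} (h : x ∈ P.Q i) : P.idx x = i := by
  by_contra hne
  exact (P.hdisj hne).ne_of_mem (P.mem_idx x) h rfl

/-- Common refinement of two nice partitions. -/
noncomputable def meet (P P' : NicePart X) : NicePart X where
  ι := P.ι × P'.ι
  Q p := P.Q p.1 ∩ P'.Q p.2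
  hdisj := by
    rintro ⟨i, j⟩ ⟨i', j'⟩ hne
    rcases Prod.mk.injEq .. ▸ fun h => hne h with -
    by_cases hi : i = i'
    · subst hi
      have hj : j ≠ j' := fun h => hne (by rw [h])
      exact Set.disjoint_of_subset inter_subset_right inter_subset_right (P'.hdisj hj)
    · exact Set.disjoint_of_subset inter_subset_left inter_subset_left (P.hdisj hi)
  hcover x := ⟨⟨P.idx x, P'.idx x⟩, P.mem_idx x, P'.mem_idx x⟩
  κ := P.κ × P'.κ
  hκ := by haveI := P.hκ; haveI := P'.hκ; infer_instance
  C p k := P.C p.1 k.1 ∩ P'.C p.2 k.2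
  hCc p k := (P.hCc _ _).inter (P'.hCc _ _)
  hQC := by
    rintro ⟨i, j⟩
    ext x
    simp only [mem_inter_iff, mem_iUnion, P.hQC i, P'.hQC j]
    exact ⟨fun ⟨⟨k, hk⟩, ⟨k', hk'⟩⟩ => ⟨⟨k, k'⟩, hk, hk'⟩,
      fun ⟨k, h1, h2⟩ => ⟨⟨k.1, h1⟩, ⟨k.2, h2⟩⟩⟩
  hlf := by
    rintro ⟨k, k'⟩ x
    obtain ⟨U, hU, hUf⟩ := P.hlf k x
    obtain ⟨V, hV, hVf⟩ := P'.hlf k' x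
    refine ⟨U ∩ V, Filter.inter_mem hU hV, ?_⟩
    have : {p : P.ι × P'.ι | ((P.C p.1 k ∩ P'.C p.2 k') ∩ (U ∩ V)).Nonempty} ⊆
        {i | (P.C i k ∩ U).Nonempty} ×ˢ {j | (P'.C j k' ∩ V).Nonempty} := by
      rintro ⟨i, j⟩ ⟨z, ⟨hz1, hz2⟩, hz3, hz4⟩
      exact ⟨⟨z, hz1, hz3⟩, ⟨z, hz2, hz4⟩⟩
    exact (hUf.prod hVf).subset this

lemma meet_idx (P P' : NicePart X) (x : X) :
    (P.meet P').idx x = (P.idx x, P'.idx x) :=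
  (P.meet P').idx_eq ⟨P.mem_idx x, P'.mem_idx x⟩

end NicePart

open Metric in
/-- Key construction: a nice partition all of whose pieces have `E`-trace of
`d`-diameter at most `2 * ε`. -/
lemma exists_small_nicePart {X : Type u} [TopologicalSpace X] [ParacompactSpace X]
    (hperf : ∀ U : Set X, IsOpen U → IsFsigma U)
    (E : Set X) (m : MetricSpace ↥E)
    (hm : m.toUniformSpace.toTopologicalSpace = instTopologicalSpaceSubtype)
    {ε : ℝ} (hε : 0 < ε) :
    ∃ P : NicePart X, ∀ i, ∀ e f : ↥E, (e : X) ∈ P.Q i → (f : X) ∈ P.Q i →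
      @dist _ m.toPseudoMetricSpace.toDist e f ≤ 2 * ε := by
  classical
  letI := m
  -- Step 1: for each `e : E`, an open `W e ∋ e` in `X` whose `E`-trace lies in `ball e ε`.
  have hball : ∀ e : ↥E, ∃ Wo : Set X, IsOpen Wo ∧ (e : X) ∈ Wo ∧
      ∀ f : ↥E, (f : X) ∈ Wo → dist f e < ε := by
    intro e
    have hb' : @IsOpen _ (TopologicalSpace.induced (Subtype.val : ↥E → X) ‹TopologicalSpace X›)
        (Metric.ball e ε) := by
      have : TopologicalSpace.induced (Subtype.val : ↥E → X) ‹TopologicalSpace X›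
          = m.toUniformSpace.toTopologicalSpace := by rw [hm]; rfl
      rw [this]
      exact Metric.isOpen_ball
    obtain ⟨Wo, hWo, hpre⟩ := isOpen_induced_iff.mp hb'
    refine ⟨Wo, hWo, ?_, ?_⟩
    · have : e ∈ Metric.ball e ε := Metric.mem_ball_self hε
      rw [← hpre] at this; exact this
    · intro f hf
      have : f ∈ Subtype.val ⁻¹' Wo := hf
      rw [hpre] at this
      exact this
  choose W hWo hWe hWd using hball
  set A := ⋃ e, W e with hA
  have hAo : IsOpen A := isOpen_iUnion hWo
  obtain ⟨F, hFc, hFU⟩ := hperf A hAo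
  set Kk : ℕ → Set X := fun k => ⋃ j ∈ Finset.range (k + 1), F j with hKk
  set Bk : ℕ → Set X := fun k => ⋃ j ∈ Finset.range k, F j with hBk
  have hKc : ∀ k, IsClosed (Kk k) := fun k =>
    isClosed_biUnion_finset fun j _ => hFc j
  have hBc : ∀ k, IsClosed (Bk k) := fun k =>
    isClosed_biUnion_finset fun j _ => hFc j
  have hKA : ∀ k, Kk k ⊆ A := fun k => by
    rw [hFU]
    exact Set.iUnion₂_subset fun j _ => Set.subset_iUnion F j
  have hKB : ∀ {k k' : ℕ}, k < k' → Kk k ⊆ Bk k' := by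
    intro k k' hkk'
    refine Set.iUnion₂_subset fun j hj => ?_
    refine Set.subset_iUnion₂ (s := fun j _ => F j) j ?_
    simp only [Finset.mem_range] at hj ⊢
    omega
  -- Step 2: for each `k`, a locally finite precise refinement of the cover
  -- `{W e} ∪ {(Kk k)ᶜ}`.
  have hcov : ∀ k : ℕ, ⋃ o : Option ↥E, (Option.elim o (Kk k)ᶜ W) = Set.univ := by
    intro k
    rw [Set.eq_univ_iff_forall]
    intro x
    by_cases hx : x ∈ Kk k
    · have : x ∈ A := hKA k hx
      rw [hA] at this
      obtain ⟨e, he⟩ := Set.mem_iUnion.1 this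
      exact Set.mem_iUnion.2 ⟨some e, he⟩
    · exact Set.mem_iUnion.2 ⟨none, hx⟩
  have hpr : ∀ k : ℕ, ∃ v : Option ↥E → Set X, (∀ a, IsOpen (v a)) ∧
      ⋃ i, v i = Set.univ ∧ LocallyFinite v ∧ ∀ a, v a ⊆ Option.elim a (Kk k)ᶜ W := by
    intro k
    exact precise_refinement _ (fun o => by cases o with
      | none => exact (hKc k).isOpen_compl
      | some e => exact hWo e) (hcov k)
  choose v hvo hvU hvlf hvu using hpr
  -- Step 3: disjointify each refinement along a well-order.
  let rel : Option ↥E → Option ↥E → Prop := WellOrderingRel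
  haveI hwo : IsWellOrder (Option ↥E) rel := WellOrderingRel.isWellOrder
  let R : ℕ → Option ↥E → Set X := fun k a => (⋃ b ∈ {b | rel b a}, v k b)ᶜ
  have hRc : ∀ k a, IsClosed (R k a) :=
    fun k a => (isOpen_biUnion fun b _ => hvo k b).isClosed_compl
  let D : ℕ → Option ↥E → Set X := fun k a => v k a ∩ R k a
  have hDdisj : ∀ (k : ℕ) {a a' : Option ↥E}, a ≠ a' → Disjoint (D k a) (D k a') := by
    intro k a a' hne
    rcases trichotomous_of rel a a' with h | h | h
    · refine Set.disjoint_left.2 fun z hz hz' => ?_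
      exact hz'.2 (Set.mem_iUnion₂.2 ⟨a, h, hz.1⟩)
    · exact absurd h hne
    · refine Set.disjoint_left.2 fun z hz hz' => ?_
      exact hz.2 (Set.mem_iUnion₂.2 ⟨a', h, hz'.1⟩)
  have hDcov : ∀ (k : ℕ) (x : X), ∃ a, x ∈ D k a := by
    intro k x
    have hx : x ∈ ⋃ i, v k i := (hvU k).symm ▸ Set.mem_univ x
    obtain ⟨a₀, ha₀⟩ := Set.mem_iUnion.1 hx
    have hS : {a | x ∈ v k a}.Nonempty := ⟨a₀, ha₀⟩
    obtain hmin := hwo.wf.min_mem _ hS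
    refine ⟨hwo.wf.min _ hS, hmin, ?_⟩
    intro hmem
    obtain ⟨b, hb, hbx⟩ := Set.mem_iUnion₂.1 hmem
    exact hwo.wf.not_lt_min _ hbx hb
  -- Step 4: decompositions of the open sets involved.
  choose G hGc hGU using fun (k : ℕ) (a : Option ↥E) => hperf (v k a) (hvo k a)
  choose Hd hHc hHU using fun (k : ℕ) => hperf (Bk k)ᶜ (hBc k).isOpen_compl
  -- Step 5: assemble the nice partition.
  refine ⟨⟨(Option ↥E × ULift.{u} ℕ) ⊕ PUnit,
    (fun i => match i with
      | .inl p => D p.2.down p.1 ∩ (Kk p.2.down \ Bk p.2.down)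
      | .inr _ => Aᶜ),
    ?_, ?_, ULift.{u} (ℕ × ℕ × ℕ), inferInstance,
    (fun i k => match i with
      | .inl p => if k.down.1 = p.2.down then
          G p.2.down p.1 k.down.2.1 ∩ R p.2.down p.1 ∩ Kk p.2.down ∩ Hd p.2.down k.down.2.2
          else ∅
      | .inr _ => Aᶜ),
    ?_, ?_, ?_⟩, ?_⟩
  · -- disjointness
    rintro (⟨a, ⟨k⟩⟩ | ⟨⟩) (⟨a', ⟨k'⟩⟩ | ⟨⟩) hne
    · by_cases hkk' : k = k'
      · subst hkk'
        have haa' : a ≠ a' := by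
          intro h; exact hne (by rw [h])
        exact Set.disjoint_of_subset Set.inter_subset_left Set.inter_subset_left
          (hDdisj k haa')
      · rcases Nat.lt_or_ge k k' with h | h
        · refine Set.disjoint_left.2 fun z hz hz' => ?_
          exact hz'.2.2 (hKB h hz.2.1)
        · have h' : k' < k := lt_of_le_of_ne h fun hh => hkk' hh.symm
          refine Set.disjoint_left.2 fun z hz hz' => ?_
          exact hz.2.2 (hKB h' hz'.2.1)
    · refine Set.disjoint_left.2 fun z hz hz' => ?_
      exact hz' (hKA _ hz.2.1)
    · refine Set.disjoint_left.2 fun z hz hz' => ?_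
      exact hz (hKA _ hz'.2.1)
    · exact absurd rfl hne
  · -- cover
    intro x
    by_cases hx : x ∈ A
    · have hx' : ∃ j, x ∈ F j := Set.mem_iUnion.1 (hFU ▸ hx)
      set k := Nat.find hx' with hk
      obtain ⟨a, ha⟩ := hDcov k x
      refine ⟨.inl ⟨a, ⟨k⟩⟩, ha, ?_, ?_⟩
      · exact Set.mem_biUnion (Finset.mem_range.2 (Nat.lt_succ_self k)) (Nat.find_spec hx')
      · intro hmem
        obtain ⟨j, hj, hjx⟩ := Set.mem_iUnion₂.1 hmem
        exact Nat.find_min hx' (Finset.mem_range.1 hj) hjx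
    · exact ⟨.inr ⟨⟩, hx⟩
  · -- C closed
    rintro (⟨a, ⟨k⟩⟩ | ⟨⟩) ⟨k', m₁, m₂⟩
    · dsimp only
      split
      · exact (((hGc _ _ _).inter (hRc _ _)).inter (hKc _)).inter (hHc _ _)
      · exact isClosed_empty
    · exact hAo.isClosed_compl
  · -- Q = ⋃ C
    rintro (⟨a, ⟨k⟩⟩ | ⟨⟩)
    · ext x
      simp only [Set.mem_iUnion]
      constructor
      · rintro ⟨⟨hxv, hxR⟩, hxK, hxB⟩
        have h1 : x ∈ ⋃ n, G k a n := (hGU k a) ▸ hxv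
        have h2 : x ∈ ⋃ n, Hd k n := (hHU k) ▸ hxB
        obtain ⟨m₁, hm₁⟩ := Set.mem_iUnion.1 h1
        obtain ⟨m₂, hm₂⟩ := Set.mem_iUnion.1 h2
        exact ⟨⟨k, m₁, m₂⟩, by simp [hm₁, hxR, hxK, hm₂]⟩
      · rintro ⟨⟨k', m₁, m₂⟩, hx⟩
        dsimp only at hx
        split at hx
        · next hk' =>
          subst hk'
          obtain ⟨⟨⟨hxG, hxR⟩, hxK⟩, hxH⟩ := hx
          refine ⟨⟨?_, hxR⟩, hxK, ?_⟩
          · rw [hGU k' a]; exact Set.mem_iUnion.2 ⟨m₁, hxG⟩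
          · intro hxB
            have : x ∈ (Bk k')ᶜ := (hHU k') ▸ Set.mem_iUnion.2 ⟨m₂, hxH⟩
            exact this hxB
        · exact absurd hx (Set.notMem_empty x)
    · ext x
      simp only [Set.mem_iUnion]
      exact ⟨fun h => ⟨⟨0, 0, 0⟩, h⟩, fun ⟨_, h⟩ => h⟩
  · -- locally finite
    rintro ⟨k₀, m₁, m₂⟩ x
    obtain ⟨U, hU, hUf⟩ := hvlf k₀ x
    refine ⟨U, hU, ?_⟩
    have hsub : {i : (Option ↥E × ULift.{u} ℕ) ⊕ PUnit |
        ((match i with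
          | .inl p => if (ULift.up (k₀, m₁, m₂) : ULift.{u} (ℕ×ℕ×ℕ)).down.1 = p.2.down then
              G p.2.down p.1 (k₀, m₁, m₂).2.1 ∩ R p.2.down p.1 ∩ Kk p.2.down ∩
                Hd p.2.down (k₀, m₁, m₂).2.2
              else ∅
          | .inr _ => Aᶜ) ∩ U).Nonempty} ⊆
        ((fun a => Sum.inl (a, ULift.up k₀)) ''
          {a : Option ↥E | (v k₀ a ∩ U).Nonempty}) ∪ Set.range Sum.inr := by
      rintro (⟨a, ⟨k⟩⟩ | u) ⟨z, hz1, hz2⟩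
      · dsimp only at hz1
        split at hz1
        · next hk =>
          subst hk
          refine Set.mem_union_left _ ?_
          refine ⟨a, ⟨z, ?_, hz2⟩, rfl⟩
          have hzG : z ∈ G k₀ a m₁ := hz1.1.1.1
          have hGsub : G k₀ a m₁ ⊆ v k₀ a := by
            rw [hGU k₀ a]; exact Set.subset_iUnion _ m₁
          exact hGsub hzG
        · exact absurd hz1 (Set.notMem_empty z)
      · exact Set.mem_union_right _ ⟨u, rfl⟩
    refine Set.Finite.subset ?_ hsub
    exact ((hUf.image _).union (Set.finite_range _))
  · -- smallness
    rintro (⟨a, ⟨k⟩⟩ | ⟨⟩) e f he hf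
    · cases a with
      | none =>
        exfalso
        have h1 : (e : X) ∈ v k none := he.1.1
        have h2 : (e : X) ∈ Kk k := he.2.1
        exact (hvu k none h1) h2
      | some e₀ =>
        have h1 : (e : X) ∈ W e₀ := hvu k (some e₀) he.1.1
        have h2 : (f : X) ∈ W e₀ := hvu k (some e₀) hf.1.1
        have d1 := hWd e₀ e h1
        have d2 := hWd e₀ f h2
        calc dist e f ≤ dist e e₀ + dist e₀ f := dist_triangle _ _ _
          _ ≤ ε + ε := by
              rw [dist_comm e₀ f] at *
              exact add_le_add (le_of_lt d1) (le_of_lt d2)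
          _ = 2 * ε := by ring
    · exfalso
      exact he (Set.mem_iUnion.2 ⟨e, hWe e⟩)


lemma aux_retract {X : Type u} [TopologicalSpace X] [ParacompactSpace X]
    (hperf : ∀ U : Set X, IsOpen U → IsFsigma U)
    (E : Set X) (hne : E.Nonempty) (m : MetricSpace ↥E)
    (hm : m.toUniformSpace.toTopologicalSpace = instTopologicalSpaceSubtype)
    (hcomp : @CompleteSpace ↥E m.toUniformSpace) :
    ∃ r : X → ↥E, (∀ x : ↥E, r ↑x = x) ∧
      ∀ V : Set ↥E, @IsOpen _ m.toUniformSpace.toTopologicalSpace V →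
        IsFsigma (r ⁻¹' V) := by
  classical
  letI := m
  haveI : CompleteSpace ↥E := hcomp
  obtain ⟨e₀, he₀⟩ := hne
  set ε : ℕ → ℝ := fun n => (1 / 2 : ℝ) ^ n with hεdef
  have hεpos : ∀ n, 0 < ε n := fun n => pow_pos (by norm_num) n
  have hεhalf : ∀ n, ε (n + 1) = ε n / 2 := by
    intro n
    show (1 / 2 : ℝ) ^ (n + 1) = (1 / 2 : ℝ) ^ n / 2
    rw [pow_succ]; ring
  have key : ∀ n : ℕ, ∃ P : NicePart X,
      ∀ i, ∀ e f : ↥E, (e : X) ∈ P.Q i → (f : X) ∈ P.Q i → dist e f ≤ 2 * ε n :=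
    fun n => exists_small_nicePart hperf E m hm (hεpos n)
  choose KP hKP using key
  -- a choice of a point of `E` in a set, when one exists
  let pick : Set X → ↥E := fun s => if h : ∃ e : ↥E, (e : X) ∈ s then h.choose else ⟨e₀, he₀⟩
  have hpick : ∀ s : Set X, (∃ e : ↥E, (e : X) ∈ s) → ((pick s : ↥E) : X) ∈ s := by
    intro s h
    simp only [pick, dif_pos h]
    exact h.choose_spec
  -- the recursive sequence of stages
  let T := Σ' P : NicePart X, P.ι → ↥E
  let t0 : T := ⟨KP 0, fun i => pick ((KP 0).Q i)⟩
  let step : ℕ → T → T := fun n t =>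
    ⟨(KP (n + 1)).meet t.1, fun i =>
      if _ : ∃ e : ↥E, (e : X) ∈ ((KP (n + 1)).meet t.1).Q i then
        pick (((KP (n + 1)).meet t.1).Q i) else t.2 i.2⟩
  let S : ℕ → T := fun n => Nat.rec t0 step n
  have hSsucc : ∀ n, S (n + 1) = step n (S n) := fun n => rfl
  let rn : ℕ → X → ↥E := fun n x => (S n).2 ((S n).1.idx x)
  -- invariant 1: the value of a piece with nonempty `E`-trace lies in the piece
  have Inv1 : ∀ n i, (∃ e : ↥E, (e : X) ∈ (S n).1.Q i) → (((S n).2 i : ↥E) : X) ∈ (S n).1.Q i := by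
    intro n
    cases n with
    | zero => exact fun i h => hpick _ h
    | succ n =>
      intro i h
      have hv : (S (n + 1)).2 i = pick ((S (n + 1)).1.Q i) := dif_pos h
      rw [hv]
      exact hpick _ h
  -- invariant 2: pieces have small E-trace
  have Inv2 : ∀ n i, ∀ e f : ↥E, (e : X) ∈ (S n).1.Q i → (f : X) ∈ (S n).1.Q i →
      dist e f ≤ 2 * ε n := by
    intro n
    cases n with
    | zero => exact hKP 0
    | succ n =>
      intro i e f he hf
      exact hKP (n + 1) i.1 e f he.1 hf.1
  -- consecutive values are close
  have hclose : ∀ n x, dist (rn (n + 1) x) (rn n x) ≤ 2 * ε n := by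
    intro n x
    have hidx : (((KP (n + 1)).meet (S n).1)).idx x = ((KP (n + 1)).idx x, (S n).1.idx x) :=
      NicePart.meet_idx _ _ x
    show dist ((S (n + 1)).2 ((S (n + 1)).1.idx x)) ((S n).2 ((S n).1.idx x)) ≤ 2 * ε n
    rw [hSsucc n]
    set P' := (KP (n + 1)).meet (S n).1 with hP'
    by_cases h : ∃ e : ↥E, (e : X) ∈ P'.Q (P'.idx x)
    · have hv : (S (n + 1)).2 ((S (n + 1)).1.idx x) = pick (P'.Q (P'.idx x)) := dif_pos h
      rw [hv]
      have hval : ((pick (P'.Q (P'.idx x)) : ↥E) : X) ∈ P'.Q (P'.idx x) := hpick _ h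
      have hsub : P'.Q (P'.idx x) ⊆ (S n).1.Q ((S n).1.idx x) := by
        rw [hidx]
        exact Set.inter_subset_right
      obtain ⟨e, he⟩ := h
      have htrace : ∃ e : ↥E, (e : X) ∈ (S n).1.Q ((S n).1.idx x) := ⟨e, hsub he⟩
      have hold := Inv1 n _ htrace
      exact Inv2 n _ _ _ (hsub hval) hold
    · have hv : (S (n + 1)).2 ((S (n + 1)).1.idx x) = (S n).2 ((P'.idx x)).2 := dif_neg h
      rw [hv]
      have h2 : (P'.idx x).2 = (S n).1.idx x := by rw [hidx]
      rw [h2, dist_self]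
      have := hεpos n
      linarith
  -- points of `E` are close to their values
  have hfixn : ∀ n (y : ↥E), dist (rn n ↑y) y ≤ 2 * ε n := by
    intro n y
    have hy : (y : X) ∈ (S n).1.Q ((S n).1.idx ↑y) := (S n).1.mem_idx _
    have hval := Inv1 n _ ⟨y, hy⟩
    exact Inv2 n _ _ _ hval hy
  -- preimages under `rn` of arbitrary sets are Fσ
  have hFs : ∀ n (Sv : Set ↥E), IsFsigma (rn n ⁻¹' Sv) := by
    intro n Sv
    have : rn n ⁻¹' Sv = ⋃ i ∈ {i | (S n).2 i ∈ Sv}, (S n).1.Q i := by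
      ext x
      simp only [Set.mem_preimage, Set.mem_iUnion, Set.mem_setOf_eq]
      constructor
      · intro hx
        exact ⟨(S n).1.idx x, hx, (S n).1.mem_idx x⟩
      · rintro ⟨i, hi, hx⟩
        have : (S n).1.idx x = i := (S n).1.idx_eq hx
        show (S n).2 ((S n).1.idx x) ∈ Sv
        rw [this]; exact hi
    rw [this]
    exact (S n).1.isFsigma_biUnion _
  -- the sequence converges
  have hcauchy : ∀ x, CauchySeq (fun n => rn n x) := by
    intro x
    refine cauchySeq_of_le_geometric (1 / 2) 2 (by norm_num) fun n => ?_
    rw [dist_comm]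
    exact hclose n x
  have hlim := fun x => cauchySeq_tendsto_of_complete (hcauchy x)
  let r : X → ↥E := fun x => (hlim x).choose
  have hr := fun x => (hlim x).choose_spec
  -- distance from `rn n x` to the limit
  have hstep2 : ∀ n j x, dist (rn n x) (rn (n + j) x) ≤ 4 * ε n - 4 * ε (n + j) := by
    intro n j x
    induction j with
    | zero => simp
    | succ j ih =>
      calc dist (rn n x) (rn (n + (j + 1)) x)
          ≤ dist (rn n x) (rn (n + j) x) + dist (rn (n + j) x) (rn (n + j + 1) x) := by
            rw [show n + (j + 1) = n + j + 1 from rfl]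
            exact dist_triangle _ _ _
        _ ≤ (4 * ε n - 4 * ε (n + j)) + 2 * ε (n + j) := by
            refine add_le_add ih ?_
            rw [dist_comm]
            exact hclose (n + j) x
        _ = 4 * ε n - 4 * ε (n + j + 1) := by
            rw [show n + j + 1 = (n + j) + 1 from rfl, hεhalf (n + j)]
            ring
  have hdistlim : ∀ n x, dist (rn n x) (r x) ≤ 4 * ε n := by
    intro n x
    have h1 : Filter.Tendsto (fun j => rn (n + j) x) Filter.atTop
        (@nhds _ m.toUniformSpace.toTopologicalSpace (r x)) := by
      have := (hr x).comp (Filter.tendsto_add_atTop_nat n)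
      simpa [Function.comp_def, Nat.add_comm] using this
    have htend : Filter.Tendsto (fun j => dist (rn n x) (rn (n + j) x)) Filter.atTop
        (nhds (dist (rn n x) (r x))) := Filter.Tendsto.dist
          (@tendsto_const_nhds ↥E m.toUniformSpace.toTopologicalSpace ℕ (rn n x) Filter.atTop) h1
    refine le_of_tendsto htend (Filter.Eventually.of_forall fun j => ?_)
    calc dist (rn n x) (rn (n + j) x) ≤ 4 * ε n - 4 * ε (n + j) := hstep2 n j x
      _ ≤ 4 * ε n := by
          have := hεpos (n + j)
          linarith
  have hε0 : Filter.Tendsto (fun n => ε n) Filter.atTop (nhds 0) :=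
    tendsto_pow_atTop_nhds_zero_of_lt_one (by norm_num) (by norm_num)
  refine ⟨r, ?_, ?_⟩
  · -- r fixes E
    intro y
    have hb : ∀ n, dist (r ↑y) y ≤ 6 * ε n := by
      intro n
      calc dist (r ↑y) y ≤ dist (r ↑y) (rn n ↑y) + dist (rn n ↑y) y := dist_triangle _ _ _
        _ ≤ 4 * ε n + 2 * ε n := by
            refine add_le_add ?_ (hfixn n y)
            rw [dist_comm]
            exact hdistlim n ↑y
        _ = 6 * ε n := by ring
    have h6 : Filter.Tendsto (fun n => 6 * ε n) Filter.atTop (nhds 0) := by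
      simpa using hε0.const_mul 6
    have : dist (r ↑y) y ≤ 0 := ge_of_tendsto h6 (Filter.Eventually.of_forall hb)
    exact dist_le_zero.1 this
  · -- first Lebesgue class
    intro V hV
    have heq : r ⁻¹' V = ⋃ n, rn n ⁻¹' {e : ↥E | ∀ f : ↥E, dist f e ≤ 5 * ε n → f ∈ V} := by
      ext x
      simp only [Set.mem_preimage, Set.mem_iUnion, Set.mem_setOf_eq]
      constructor
      · intro hx
        obtain ⟨δ, hδ, hball⟩ := Metric.isOpen_iff.1 hV (r x) hx
        obtain ⟨n, hn⟩ := exists_pow_lt_of_lt_one (x := δ / 9) (by positivity)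
          (show (1 / 2 : ℝ) < 1 by norm_num)
        refine ⟨n, fun f hf => ?_⟩
        apply hball
        rw [Metric.mem_ball]
        calc dist f (r x) ≤ dist f (rn n x) + dist (rn n x) (r x) := dist_triangle _ _ _
          _ ≤ 5 * ε n + 4 * ε n := add_le_add hf (hdistlim n x)
          _ = 9 * ε n := by ring
          _ < δ := by
              have : ε n < δ / 9 := hn
              linarith
      · rintro ⟨n, hn⟩
        refine hn (r x) ?_
        rw [dist_comm]
        calc dist (rn n x) (r x) ≤ 4 * ε n := hdistlim n x
          _ ≤ 5 * ε n := by have := hεpos n; linarith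
    rw [heq]
    exact isFsigma_iUnion_nat fun n => hFs n _

end H1Aux

/-- **Theorem (main).** If `X` is a Hausdorff perfect paracompact space (every open set is Fσ)
and `E` is a nonempty completely metrizable subspace of `X`, then `E` is an H₁-retract of `X`. -/
theorem isH1Retract_of_completelyMetrizable_subspace
    {X : Type*} [TopologicalSpace X] [T2Space X] [ParacompactSpace X]
    (hperf : ∀ U : Set X, IsOpen U → IsFsigma U)
    (E : Set X) (hne : E.Nonempty) (hcm : CompletelyMetrizable E) :
    IsH1Retract E := by
  obtain ⟨m, hm, hcomp⟩ := hcm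
  obtain ⟨r, hfix, hFs⟩ := H1Aux.aux_retract hperf E hne m hm hcomp
  refine ⟨r, hfix, ?_⟩
  intro V hV
  refine hFs V ?_
  rw [hm]
  exact hV
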